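/- Attractors of 𝔹(Γ) map surjectively via ψ onto attractors of Γ: the image under ψ of any attractor of 𝔹(Γ) is an attractor of Γ, and every attractor of Γ arises this way. -/
import Mathlib


/-!
Common setup: multilevel discrete networks (Faure–Kaji, "A circuit-preserving
mapping from multilevel to Boolean dynamics").

A gene `i` takes levels in `{0,...,b i}`, encoded as `Fin (b i + 1)`.
The Boolean case is `b i = 1`.
-/

namespace GRN

section Generic

variable {ι : Type*} [Fintype ι] [DecidableEq ι] (b : ι → ℕ)

/-- the state space `∏ i {0,…,b i}` -/
abbrev GState := ∀ i : ι, Fin (b i + 1)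

/-- L¹ distance between states -/
def dist1 (x x' : GState b) : ℕ := ∑ i, Nat.dist (x i : ℕ) (x' i : ℕ)

/-- edge relation of the asynchronous state transition graph `Γ(f)` -/
def stgEdge (f : GState b → GState b) (x x' : GState b) : Prop :=
  ∃ j : ι, (∀ k, k ≠ j → x' k = x k) ∧
    (((x j : ℕ) < (f x j : ℕ) ∧ (x' j : ℕ) = (x j : ℕ) + 1) ∨
     ((f x j : ℕ) < (x j : ℕ) ∧ (x' j : ℕ) + 1 = (x j : ℕ)))

/-- a grid graph: every edge joins states at distance one, and there are no
two parallel outward edges at any vertex -/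
def IsGridGraph (E : GState b → GState b → Prop) : Prop :=
  (∀ x x', E x x' → dist1 b x x' = 1) ∧
  (∀ (x x' x'' : GState b) (j : ι), E x x' → E x x'' →
    (∀ k, k ≠ j → x' k = x k) → (∀ k, k ≠ j → x'' k = x k) → x' = x'')

/-- asymptotic evolution function: `f i x ∈ {0, x i, b i}` -/
def Asymptotic (f : GState b → GState b) : Prop :=
  ∀ (x : GState b) (i : ι), (f x i : ℕ) = 0 ∨ f x i = x i ∨ (f x i : ℕ) = b i

/-- stepwise (unitary) evolution function: `|f i x - x i| ≤ 1` -/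
def Stepwise (f : GState b → GState b) : Prop :=
  ∀ (x : GState b) (i : ι), (f x i : ℕ) ≤ (x i : ℕ) + 1 ∧ (x i : ℕ) ≤ (f x i : ℕ) + 1

/-- the asymptotic function `f̄` associated with `f` -/
def asym (f : GState b → GState b) : GState b → GState b := fun x i =>
  if (x i : ℕ) < (f x i : ℕ) then Fin.last (b i)
  else if (f x i : ℕ) < (x i : ℕ) then 0 else x i

/-- the stepwise function `f̂` associated with `f` -/
def stepw (f : GState b → GState b) : GState b → GState b := fun x i =>
  if h : (x i : ℕ) < (f x i : ℕ) then ⟨(x i : ℕ) + 1, Nat.lt_of_le_of_lt h (f x i).isLt⟩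
  else if (f x i : ℕ) < (x i : ℕ) then
    ⟨(x i : ℕ) - 1, lt_of_le_of_lt (Nat.sub_le _ _) (x i).isLt⟩
  else x i

/-- `x + e j` (defined when `x j < b j`) -/
def bump (x : GState b) (j : ι) (h : (x j : ℕ) < b j) : GState b :=
  Function.update x j ⟨(x j : ℕ) + 1, Nat.succ_lt_succ h⟩

/-- `x - e j` -/
def drop (x : GState b) (j : ι) : GState b :=
  Function.update x j ⟨(x j : ℕ) - 1, lt_of_le_of_lt (Nat.sub_le _ _) (x j).isLt⟩

/-- positive edge `j → i` in the local interaction graph `Gf(x)`: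
`∂⁺ⱼfᵢ(x) > 0` or `∂⁻ⱼfᵢ(x) > 0` -/
def PosEdge (f : GState b → GState b) (x : GState b) (j i : ι) : Prop :=
  (∃ h : (x j : ℕ) < b j, (f x i : ℕ) < (f (bump b x j h) i : ℕ)) ∨
  (0 < (x j : ℕ) ∧ (f (drop b x j) i : ℕ) < (f x i : ℕ))

/-- negative edge `j → i` in the local interaction graph `Gf(x)` -/
def NegEdge (f : GState b → GState b) (x : GState b) (j i : ι) : Prop :=
  (∃ h : (x j : ℕ) < b j, (f (bump b x j h) i : ℕ) < (f x i : ℕ)) ∨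
  (0 < (x j : ℕ) ∧ (f x i : ℕ) < (f (drop b x j) i : ℕ))

/-- an edge with sign `s` (`true` = negative) -/
def SignedEdge (f : GState b → GState b) (x : GState b) (s : Bool) (j i : ι) : Prop :=
  if s then NegEdge b f x j i else PosEdge b f x j i

/-- a type-1 functional circuit at `x`, negative iff `neg`: a cycle (with
pairwise-distinct vertices) in the local interaction graph `Gf(x)` whose number
of negative edges is odd iff `neg` -/
def HasType1Circuit (f : GState b → GState b) (x : GState b) (neg : Bool) : Prop :=
  ∃ (k : ℕ) (v : Fin (k + 1) → ι) (s : Fin (k + 1) → Bool),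
    Function.Injective v ∧
    (∀ t, SignedEdge b f x (s t) (v t) (v (t + 1))) ∧
    (Odd (Finset.univ.filter fun t => s t = true).card ↔ neg = true)

/-- mutual reachability -/
def InSameSCC (E : GState b → GState b → Prop) (x y : GState b) : Prop :=
  Relation.ReflTransGen E x y ∧ Relation.ReflTransGen E y x

/-- the strongly connected component of `x` -/
def sccOf (E : GState b → GState b → Prop) (x : GState b) : Set (GState b) :=
  {y | InSameSCC b E x y}

/-- attractor: terminal strongly connected set of states -/
def IsAttractor (E : GState b → GState b → Prop) (A : Set (GState b)) : Prop :=
  A.Nonempty ∧ (∀ x ∈ A, ∀ y ∈ A, Relation.ReflTransGen E x y) ∧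
  (∀ x ∈ A, ∀ y, E x y → y ∈ A)

/-- stable state: no outgoing edges -/
def IsStable (E : GState b → GState b → Prop) (x : GState b) : Prop :=
  ∀ y, ¬ E x y

end Generic

section Binarisation

variable {n : ℕ} {m : Fin n → ℕ}

/-- index set of the Boolean state space `𝔹^(m₁+⋯+mₙ)` -/
abbrev BIdx (m : Fin n → ℕ) := Σ i : Fin n, Fin (m i)

/-- all maximal levels equal to 1 -/
abbrev bOne (m : Fin n → ℕ) : BIdx m → ℕ := fun _ => 1

/-- the Boolean state space `𝔹^(m₁+⋯+mₙ)` -/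
abbrev BState (m : Fin n → ℕ) := GState (bOne m)

/-- the surjection `ψ : 𝔹^(m₁+⋯+mₙ) → M`, counting ones in each block -/
def psi (x : BState m) : GState m := fun i =>
  ⟨∑ j : Fin (m i), (x ⟨i, j⟩ : ℕ), Nat.lt_succ_of_le (by
    calc ∑ j : Fin (m i), (x ⟨i, j⟩ : ℕ) ≤ ∑ _j : Fin (m i), 1 :=
          Finset.sum_le_sum (fun j _ => Nat.lt_succ_iff.mp (x ⟨i, j⟩).isLt)
      _ = m i := by simp)⟩

/-- Van Ham's embedding `b₀ : M → 𝔹^(m₁+⋯+mₙ)`: level `k` ↦ `k` ones then zeros -/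
def vanHam (y : GState m) : BState m := fun p =>
  if (p.2 : ℕ) < (y p.1 : ℕ) then 1 else 0

/-- the binarisation `𝔹(f)` of an (asymptotic) evolution function `f` -/
def binf (f : GState m → GState m) : BState m → BState m := fun x p =>
  if (psi x p.1 : ℕ) < (f (psi x) p.1 : ℕ) then 1
  else if (f (psi x) p.1 : ℕ) < (psi x p.1 : ℕ) then 0
  else x p

/-- the binarisation `𝔹(Γ)` of a grid graph over `M`:
edge `x → x'` iff `d(x,x') = 1` and `ψ(x) → ψ(x')` in `Γ` -/
def binGraph (E : GState m → GState m → Prop) : BState m → BState m → Prop :=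
  fun x x' => dist1 (bOne m) x x' = 1 ∧ E (psi x) (psi x')

/-- the action of `𝕊 = ∏ᵢ S_{mᵢ}` on `𝔹^(m₁+⋯+mₙ)` permuting blocks coordinatewise -/
def act (σ : ∀ i : Fin n, Equiv.Perm (Fin (m i))) (x : BState m) : BState m :=
  fun p => x ⟨p.1, σ p.1 p.2⟩

/-- `𝕊`-symmetric Boolean evolution function -/
def SSym (g : BState m → BState m) : Prop :=
  ∀ (σ : ∀ i : Fin n, Equiv.Perm (Fin (m i))) (x : BState m) (p : BIdx m),
    g (act σ x) p = g x ⟨p.1, σ p.1 p.2⟩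

end Binarisation

section Helpers

variable {n : ℕ} {m : Fin n → ℕ}

lemma psi_coe (x : BState m) (i : Fin n) :
    (psi x i : ℕ) = ∑ j : Fin (m i), (x ⟨i, j⟩ : ℕ) := rfl

lemma sum_eq_one_aux {α : Type*} [Fintype α] [DecidableEq α] (f : α → ℕ) (h : ∑ i, f i = 1) :
    ∃ i, f i = 1 ∧ ∀ j, j ≠ i → f j = 0 := by
  obtain ⟨i, -, hi⟩ := Finset.exists_ne_zero_of_sum_ne_zero
    (by omega : ∑ i, f i ≠ 0)
  have h1 : f i ≤ 1 := h ▸ Finset.single_le_sum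
    (fun _ _ => Nat.zero_le _) (Finset.mem_univ i)
  refine ⟨i, by omega, fun j hj => ?_⟩
  have h2 := Finset.add_sum_erase Finset.univ f (Finset.mem_univ i)
  have hj' : f j ≤ ∑ k ∈ Finset.univ.erase i, f k :=
    Finset.single_le_sum (fun _ _ => Nat.zero_le _)
      (Finset.mem_erase.2 ⟨hj, Finset.mem_univ j⟩)
  omega

lemma update_apply (x : BState m) (i : Fin n) (j0 : Fin (m i)) (v : Fin 2)
    (j : Fin (m i)) :
    ((Function.update x ⟨i, j0⟩ v) ⟨i, j⟩ : ℕ)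
      = if j = j0 then (v : ℕ) else (x ⟨i, j⟩ : ℕ) := by
  by_cases hj : j = j0
  · subst hj; simp
  · rw [Function.update_of_ne, if_neg hj]
    intro hq
    exact hj (heq_iff_eq.mp (Sigma.mk.inj_iff.mp hq).2)

lemma psi_update (x : BState m) (i : Fin n) (j0 : Fin (m i)) (v : Fin 2) :
    (psi (Function.update x ⟨i, j0⟩ v) i : ℕ) + (x ⟨i, j0⟩ : ℕ)
      = (psi x i : ℕ) + (v : ℕ) := by
  rw [psi_coe, psi_coe,
    ← Finset.add_sum_erase _ _ (Finset.mem_univ j0),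
    ← Finset.add_sum_erase _ (fun j : Fin (m i) => (x ⟨i, j⟩ : ℕ))
      (Finset.mem_univ j0)]
  have e1 : ((Function.update x ⟨i, j0⟩ v) ⟨i, j0⟩ : ℕ) = (v : ℕ) := by
    rw [update_apply, if_pos rfl]
  have e2 : ∀ j ∈ Finset.univ.erase j0,
      ((Function.update x ⟨i, j0⟩ v) ⟨i, j⟩ : ℕ) = (x ⟨i, j⟩ : ℕ) := fun j hj => by
    rw [update_apply, if_neg (Finset.mem_erase.1 hj).1]
  rw [Finset.sum_congr rfl e2, e1]
  omega

lemma psi_update_ne (x : BState m) (i : Fin n) (j0 : Fin (m i)) (v : Fin 2)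
    (k : Fin n) (hk : k ≠ i) :
    (psi (Function.update x ⟨i, j0⟩ v) k : ℕ) = (psi x k : ℕ) := by
  rw [psi_coe, psi_coe]
  refine Finset.sum_congr rfl fun j _ => ?_
  rw [Function.update_of_ne]
  intro hq
  exact hk (congrArg Sigma.fst hq)

lemma dist1_update (x : BState m) (p : BIdx m) (v : Fin 2)
    (hv : (x p : ℕ) ≠ (v : ℕ)) :
    dist1 (bOne m) x (Function.update x p v) = 1 := by
  unfold dist1
  rw [Finset.sum_eq_single p]
  · rw [Function.update_self]
    have h1 : (x p : ℕ) < 2 := (x p).isLt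
    have h2 : (v : ℕ) < 2 := v.isLt
    unfold Nat.dist
    omega
  · intro q _ hq
    rw [Function.update_of_ne hq]
    exact Nat.dist_self _
  · intro h; exact absurd (Finset.mem_univ p) h

lemma lift_edge (E : GState m → GState m → Prop) (hE : IsGridGraph m E)
    (x : BState m) (y : GState m) (hxy : E (psi x) y) :
    ∃ x', binGraph E x x' ∧ psi x' = y := by
  have hd := hE.1 _ _ hxy
  unfold dist1 at hd
  obtain ⟨i, hi, hother⟩ := sum_eq_one_aux _ hd
  have hother' : ∀ k, k ≠ i → (psi x k : ℕ) = (y k : ℕ) := fun k hk =>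
    Nat.eq_of_dist_eq_zero (hother k hk)
  have hcase : (y i : ℕ) = (psi x i : ℕ) + 1 ∨ (psi x i : ℕ) = (y i : ℕ) + 1 := by
    unfold Nat.dist at hi; omega
  rcases hcase with hc | hc
  · -- increase: find a zero bit in block i
    have hyub : (y i : ℕ) < m i + 1 := (y i).isLt
    have hz : ∃ j0 : Fin (m i), (x ⟨i, j0⟩ : ℕ) = 0 := by
      by_contra h
      push_neg at h
      have hall : ∀ j : Fin (m i), (x ⟨i, j⟩ : ℕ) = 1 := fun j => by
        have h1 : (x ⟨i, j⟩ : ℕ) < 2 := (x ⟨i, j⟩).isLt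
        have h2 := h j
        omega
      have hsum : (psi x i : ℕ) = m i := by
        rw [psi_coe, Finset.sum_congr rfl fun j _ => hall j]
        simp
      omega
    obtain ⟨j0, hj0⟩ := hz
    have hp : psi (Function.update x ⟨i, j0⟩ 1) = y := by
      funext k
      apply Fin.ext
      by_cases hk : k = i
      · subst hk
        have := psi_update x k j0 1
        simp only [Fin.val_one] at this
        omega
      · rw [psi_update_ne x i j0 1 k hk]
        exact hother' k hk
    refine ⟨Function.update x ⟨i, j0⟩ 1, ⟨?_, ?_⟩, hp⟩
    · exact dist1_update x ⟨i, j0⟩ 1 (by rw [hj0]; simp)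
    · rw [hp]; exact hxy
  · -- decrease: find a one bit in block i
    have hz : ∃ j0 : Fin (m i), (x ⟨i, j0⟩ : ℕ) = 1 := by
      have hpos : (psi x i : ℕ) ≠ 0 := by omega
      rw [psi_coe] at hpos
      obtain ⟨j0, -, hj0⟩ := Finset.exists_ne_zero_of_sum_ne_zero hpos
      have h1 : (x ⟨i, j0⟩ : ℕ) < 2 := (x ⟨i, j0⟩).isLt
      exact ⟨j0, by omega⟩
    obtain ⟨j0, hj0⟩ := hz
    have hp : psi (Function.update x ⟨i, j0⟩ 0) = y := by
      funext k
      apply Fin.ext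
      by_cases hk : k = i
      · subst hk
        have := psi_update x k j0 0
        simp only [Fin.val_zero] at this
        omega
      · rw [psi_update_ne x i j0 0 k hk]
        exact hother' k hk
    refine ⟨Function.update x ⟨i, j0⟩ 0, ⟨?_, ?_⟩, hp⟩
    · exact dist1_update x ⟨i, j0⟩ 0 (by rw [hj0]; simp)
    · rw [hp]; exact hxy

lemma rtg_psi (E : GState m → GState m → Prop) (x y : BState m)
    (h : Relation.ReflTransGen (binGraph E) x y) :
    Relation.ReflTransGen E (psi x) (psi y) := by
  induction h with
  | refl => exact .refl
  | tail _ h2 ih => exact ih.tail h2.2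

lemma mem_of_rtg {α : Type*} {E : α → α → Prop} {S : Set α}
    (hS : ∀ x ∈ S, ∀ y, E x y → y ∈ S) {x y : α} (hx : x ∈ S)
    (h : Relation.ReflTransGen E x y) : y ∈ S := by
  induction h with
  | refl => exact hx
  | tail _ h2 ih => exact hS _ ih _ h2

lemma psi_vanHam (c : GState m) : psi (vanHam c) = c := by
  funext i
  apply Fin.ext
  rw [psi_coe]
  have key : ∀ j : Fin (m i), ((vanHam c ⟨i, j⟩ : ℕ))
      = if (j : ℕ) < (c i : ℕ) then 1 else 0 := by
    intro j
    unfold vanHam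
    split <;> rfl
  rw [Finset.sum_congr rfl fun j _ => key j]
  have hk : (c i : ℕ) ≤ m i := Nat.lt_succ_iff.mp (c i).isLt
  rw [Fin.sum_univ_eq_sum_range (fun j => if j < (c i : ℕ) then 1 else 0)]
  have hfil : (Finset.range (m i)).filter (fun j => j < (c i : ℕ))
      = Finset.range (c i : ℕ) := by
    ext j
    simp only [Finset.mem_filter, Finset.mem_range]
    omega
  rw [Finset.sum_ite, Finset.sum_const, Finset.sum_const, hfil,
    Finset.card_range]
  simp

lemma exists_attractor {ι : Type*} [Fintype ι] [DecidableEq ι] (b : ι → ℕ)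
    (E : GState b → GState b → Prop) (x : GState b) :
    ∃ A, IsAttractor b E A ∧ ∀ z ∈ A, Relation.ReflTransGen E x z := by
  suffices h : ∀ (N : ℕ) (x : GState b),
      {y | Relation.ReflTransGen E x y}.ncard ≤ N →
      ∃ A, IsAttractor b E A ∧ A ⊆ {y | Relation.ReflTransGen E x y} by
    obtain ⟨A, hA, hsub⟩ := h _ x le_rfl
    exact ⟨A, hA, fun z hz => hsub hz⟩
  intro N
  induction N with
  | zero =>
    intro x hx
    exfalso
    have hmem : x ∈ {y | Relation.ReflTransGen E x y} := Relation.ReflTransGen.refl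
    have := (Set.ncard_pos (Set.toFinite _)).2 ⟨x, hmem⟩
    omega
  | succ N ih =>
    intro x hx
    by_cases hcl : ∀ y, Relation.ReflTransGen E x y → Relation.ReflTransGen E y x
    · refine ⟨{y | Relation.ReflTransGen E x y},
        ⟨⟨x, Relation.ReflTransGen.refl⟩, ?_, ?_⟩, subset_rfl⟩
      · intro a ha c hc; exact (hcl a ha).trans hc
      · intro a ha c hac; exact ha.tail hac
    · push_neg at hcl
      obtain ⟨y, hxy, hyx⟩ := hcl
      have hsub : {z | Relation.ReflTransGen E y z}
          ⊆ {z | Relation.ReflTransGen E x z} := fun z hz => hxy.trans hz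
      have hss : {z | Relation.ReflTransGen E y z}
          ⊂ {z | Relation.ReflTransGen E x z} :=
        ⟨hsub, fun h => hyx (h Relation.ReflTransGen.refl)⟩
      have hlt := Set.ncard_lt_ncard hss (Set.toFinite _)
      obtain ⟨A, hA, hAsub⟩ := ih y (by omega)
      exact ⟨A, hA, hAsub.trans hsub⟩

end Helpers

/-- attractors of `𝔹(Γ)` map surjectively via `ψ` onto
attractors of `Γ`. -/
theorem attractors_surjective
    {n : ℕ} {m : Fin n → ℕ} (E : GState m → GState m → Prop)
    (hE : IsGridGraph m E) :
    (∀ A : Set (BState m), IsAttractor (bOne m) (binGraph E) A →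
      IsAttractor m E (psi '' A)) ∧
    (∀ C : Set (GState m), IsAttractor m E C →
      ∃ A : Set (BState m), IsAttractor (bOne m) (binGraph E) A ∧ psi '' A = C) := by
  have part1 : ∀ A : Set (BState m), IsAttractor (bOne m) (binGraph E) A →
      IsAttractor m E (psi '' A) := by
    intro A hA
    obtain ⟨hne, hconn, hterm⟩ := hA
    refine ⟨hne.image _, ?_, ?_⟩
    · rintro _ ⟨a, ha, rfl⟩ _ ⟨c, hc, rfl⟩
      exact rtg_psi _ _ _ (hconn a ha c hc)
    · rintro _ ⟨a, ha, rfl⟩ y hy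
      obtain ⟨x', hedge, hpsi⟩ := lift_edge E hE a y hy
      exact ⟨x', hterm a ha x' hedge, hpsi⟩
  refine ⟨part1, ?_⟩
  intro C hC
  obtain ⟨⟨c0, hc0⟩, hconn, hterm⟩ := hC
  obtain ⟨A, hA, hreach⟩ := exists_attractor (bOne m) (binGraph E) (vanHam c0)
  refine ⟨A, hA, ?_⟩
  have hpsi0 : psi (vanHam c0) = c0 := psi_vanHam c0
  have hsubC : ∀ z ∈ A, psi z ∈ C := by
    intro z hz
    have h1 : Relation.ReflTransGen E (psi (vanHam c0)) (psi z) :=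
      rtg_psi _ _ _ (hreach z hz)
    rw [hpsi0] at h1
    exact mem_of_rtg hterm hc0 h1
  apply Set.Subset.antisymm
  · rintro _ ⟨a, ha, rfl⟩; exact hsubC a ha
  · intro c hc
    obtain ⟨a0, ha0⟩ := hA.1
    have h1 : Relation.ReflTransGen E (psi a0) c := hconn _ (hsubC a0 ha0) c hc
    have hclosed : ∀ u ∈ psi '' A, ∀ v, E u v → v ∈ psi '' A :=
      (part1 A hA).2.2
    exact mem_of_rtg hclosed ⟨a0, ha0, rfl⟩ h1

end GRN
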